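/- Every finite poset with a global minimum whose cover graph admits a U-coloring is an upper locally distributive lattice: it is a lattice in which every element x has a unique inclusion-minimal set M_x of meet-irreducible elements with x = ⋀ M_x. -/

import Mathlib

def UColoring {V κ : Type*} (A : V → V → Prop) (c : V → V → κ) : Prop :=
  (∀ v u w : V, A v u → A v w → u ≠ w → c v u ≠ c v w) ∧
  (∀ v u w : V, A v u → A v w → u ≠ w →
    ∃ z : V, A u z ∧ A w z ∧ c v u = c w z ∧ c v w = c u z)

/-- An element of a poset is meet-irreducible if it has exactly one upper
cover or is the maximum. -/
def MeetIrred {P : Type*} [PartialOrder P] (m : P) : Prop :=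
  (∃! u : P, m ⋖ u) ∨ (∀ a : P, a ≤ m)

section Aux

variable {P : Type} [PartialOrder P] [Fintype P]

private lemma exists_covBy_right_ {a b : P} (h : a < b) : ∃ m, a ⋖ m ∧ m ≤ b := by
  obtain ⟨m, ⟨ham, hmb⟩, hmin⟩ :=
    wellFounded_lt.has_min {y : P | a < y ∧ y ≤ b} ⟨b, h, le_rfl⟩
  exact ⟨m, ⟨ham, fun s has hsm => hmin s ⟨has, hsm.le.trans hmb⟩ hsm⟩, hmb⟩

private lemma exists_covBy_left_ {a b : P} (h : a < b) : ∃ m, a ≤ m ∧ m ⋖ b := by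
  obtain ⟨m, ⟨ham, hmb⟩, hmax⟩ :=
    wellFounded_gt.has_min {y : P | a ≤ y ∧ y < b} ⟨a, le_rfl, h⟩
  exact ⟨m, ham, hmb, fun s hms hsb => hmax s ⟨ham.trans hms.le, hsb⟩ hms⟩

private lemma up_covBy {v : P} {a b : {y : P // v ≤ y}} (h : a ⋖ b) : a.1 ⋖ b.1 := by
  refine ⟨Subtype.coe_lt_coe.mpr h.1, fun s hs hsb => ?_⟩
  have hs' : a < (⟨s, a.2.trans hs.le⟩ : {y : P // v ≤ y}) := Subtype.coe_lt_coe.mp hs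
  have hsb' : (⟨s, a.2.trans hs.le⟩ : {y : P // v ≤ y}) < b := Subtype.coe_lt_coe.mp hsb
  exact h.2 hs' hsb'

private lemma covBy_up {v : P} {a b : {y : P // v ≤ y}} (h : a.1 ⋖ b.1) : a ⋖ b :=
  ⟨Subtype.coe_lt_coe.mp h.1, fun s hs hsb =>
    h.2 (Subtype.coe_lt_coe.mpr hs) (Subtype.coe_lt_coe.mpr hsb)⟩

private lemma up_ucol {κ : Type} {c : P → P → κ} (hU : UColoring (· ⋖ ·) c) (v : P) :
    UColoring ((· ⋖ ·) : {y : P // v ≤ y} → {y : P // v ≤ y} → Prop)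
      (fun a b => c a.1 b.1) := by
  constructor
  · intro a u w hau haw hne
    exact hU.1 a.1 u.1 w.1 (up_covBy hau) (up_covBy haw) fun h => hne (Subtype.ext h)
  · intro a u w hau haw hne
    obtain ⟨z, h1, h2, h3, h4⟩ := hU.2 a.1 u.1 w.1 (up_covBy hau) (up_covBy haw)
      (fun h => hne (Subtype.ext h))
    exact ⟨⟨z, a.2.trans ((up_covBy hau).le.trans h1.le)⟩, covBy_up h1, covBy_up h2, h3, h4⟩

/-- The lifting lemma: a cover edge `x ⋖ u` lifts over any `w ≥ x` to (either absorption
or) a cover edge at `w` of the same color whose top is above `u`. -/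
private lemma lift_edge {κ : Type} {c : P → P → κ} (hU : UColoring (· ⋖ ·) c)
    {x u : P} (hxu : x ⋖ u) :
    ∀ w : P, x ≤ w → u ≤ w ∨ ∃ p, w ⋖ p ∧ u ≤ p ∧ c w p = c x u := by
  intro w
  refine WellFounded.induction wellFounded_lt
    (C := fun w => x ≤ w → u ≤ w ∨ ∃ p, w ⋖ p ∧ u ≤ p ∧ c w p = c x u) w ?_
  intro w IH hxw
  rcases eq_or_lt_of_le hxw with rfl | hlt
  · exact Or.inr ⟨u, hxu, le_rfl, rfl⟩
  · obtain ⟨w₁, hxw₁, hw₁w⟩ := exists_covBy_left_ hlt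
    rcases IH w₁ hw₁w.lt hxw₁ with h | ⟨p, hp, hup, hcp⟩
    · exact Or.inl (h.trans hw₁w.le)
    · by_cases hpw : p = w
      · exact Or.inl (hpw ▸ hup)
      · obtain ⟨z, hpz, hwz, hc1, hc2⟩ := hU.2 w₁ p w hp hw₁w hpw
        exact Or.inr ⟨z, hwz, hup.trans hpz.le, by rw [← hc1, hcp]⟩

end Aux

/-- The grand induction (on the cardinality of the poset): in every finite U-colored
poset with a bottom, the diamond completion of two covers is below every common upper
bound, and any two distinct covers of `t` have no common upper element besides those
above... (the "meet" property). -/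
private theorem grand : ∀ (n : ℕ) (P κ : Type) [PartialOrder P] [Fintype P] [OrderBot P]
    (c : P → P → κ), UColoring (· ⋖ ·) c → Fintype.card P ≤ n →
    (∀ x u w z : P, x ⋖ u → x ⋖ w → u ≠ w → u ⋖ z → w ⋖ z →
        c x u = c w z → c x w = c u z → ∀ t, u ≤ t → w ≤ t → z ≤ t) ∧
    (∀ t r r' y : P, t ⋖ r → t ⋖ r' → r ≠ r' → y ≤ r → y ≤ r' → y ≤ t) := by
  intro n
  induction n with
  | zero =>
    intro P κ _ _ _ c _ hcard
    have : 0 < Fintype.card P := Fintype.card_pos_iff.mpr ⟨(⊥ : P)⟩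
    omega
  | succ n IH =>
    intro P κ _ _ _ c hU hcard
    -- transfer of the inductive hypothesis to principal filters
    have subM : ∀ v : P, v ≠ ⊥ → ∀ t r r' y : P, v ≤ t → v ≤ y →
        t ⋖ r → t ⋖ r' → r ≠ r' → y ≤ r → y ≤ r' → y ≤ t := by
      intro v hv t r r' y hvt hvy htr htr' hrr' hyr hyr'
      haveI : DecidablePred fun y : P => v ≤ y := Classical.decPred _
      letI : OrderBot {y : P // v ≤ y} := { bot := ⟨v, le_rfl⟩, bot_le := fun a => a.2 }
      have hlt : Fintype.card {y : P // v ≤ y} < Fintype.card P :=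
        Fintype.card_subtype_lt (x := ⊥) fun h => hv (le_bot_iff.mp h)
      have hM := (IH {y : P // v ≤ y} κ (fun a b => c a.1 b.1) (up_ucol hU v) (by omega)).2
      exact Subtype.mk_le_mk.mp (hM ⟨t, hvt⟩ ⟨r, hvt.trans htr.le⟩ ⟨r', hvt.trans htr'.le⟩
        ⟨y, hvy⟩ (covBy_up htr) (covBy_up htr')
        (fun h => hrr' (congrArg Subtype.val h))
        (Subtype.mk_le_mk.mpr hyr) (Subtype.mk_le_mk.mpr hyr'))
    have subB : ∀ x : P, x ≠ ⊥ → ∀ u w z : P, x ⋖ u → x ⋖ w → u ≠ w → u ⋖ z → w ⋖ z →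
        c x u = c w z → c x w = c u z → ∀ t, u ≤ t → w ≤ t → z ≤ t := by
      intro x hx u w z h1 h2 h3 h4 h5 h6 h7 t hut hwt
      haveI : DecidablePred fun y : P => x ≤ y := Classical.decPred _
      letI : OrderBot {y : P // x ≤ y} := { bot := ⟨x, le_rfl⟩, bot_le := fun a => a.2 }
      have hlt : Fintype.card {y : P // x ≤ y} < Fintype.card P :=
        Fintype.card_subtype_lt (x := ⊥) fun h => hx (le_bot_iff.mp h)
      have hB := (IH {y : P // x ≤ y} κ (fun a b => c a.1 b.1) (up_ucol hU x) (by omega)).1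
      exact Subtype.mk_le_mk.mp (hB ⟨x, le_rfl⟩ ⟨u, h1.le⟩ ⟨w, h2.le⟩ ⟨z, h1.le.trans h4.le⟩
        (covBy_up h1) (covBy_up h2) (fun h => h3 (congrArg Subtype.val h))
        (covBy_up h4) (covBy_up h5) h6 h7 ⟨t, h1.le.trans hut⟩
        (Subtype.mk_le_mk.mpr hut) (Subtype.mk_le_mk.mpr hwt))
    -- the meet property for a fixed pair of covers of t, given the diamond property
    -- bounded by r and r'
    have meetAux : ∀ t r r' : P, t ⋖ r → t ⋖ r' → r ≠ r' →
        (∀ x u w z : P, x ⋖ u → x ⋖ w → u ≠ w → u ⋖ z → w ⋖ z →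
          c x u = c w z → c x w = c u z → u ≤ r → w ≤ r → z ≤ r) →
        (∀ x u w z : P, x ⋖ u → x ⋖ w → u ≠ w → u ⋖ z → w ⋖ z →
          c x u = c w z → c x w = c u z → u ≤ r' → w ≤ r' → z ≤ r') →
        ∀ y, y ≤ r → y ≤ r' → y ≤ t := by
      intro t r r' htr htr' hrr' hBr hBr' y hyr hyr'
      by_contra hyt
      obtain ⟨y₀, ⟨h₀r, h₀r', h₀t⟩, hmin⟩ :=
        wellFounded_lt.has_min {y' : P | y' ≤ r ∧ y' ≤ r' ∧ ¬ y' ≤ t} ⟨y, hyr, hyr', hyt⟩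
      have h₀bot : (⊥ : P) < y₀ := by
        rcases eq_or_lt_of_le (bot_le : (⊥ : P) ≤ y₀) with h | h
        · exact absurd (h ▸ bot_le) h₀t
        · exact h
      obtain ⟨v, -, hvy₀⟩ := exists_covBy_left_ h₀bot
      have hvr : v ≤ r := hvy₀.le.trans h₀r
      have hvr' : v ≤ r' := hvy₀.le.trans h₀r'
      have hvt : v ≤ t := by
        by_contra hvt
        exact hmin v ⟨hvr, hvr', hvt⟩ hvy₀.lt
      by_cases hv : v = ⊥
      · subst hv
        by_cases ht : t = ⊥
        · subst ht
          have h1 : y₀ = r := by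
            rcases h₀r.lt_or_eq with h | h
            · exact absurd h (htr.2 h₀bot)
            · exact h
          have h2 : y₀ = r' := by
            rcases h₀r'.lt_or_eq with h | h
            · exact absurd h (htr'.2 h₀bot)
            · exact h
          exact hrr' (h1 ▸ h2)
        · obtain ⟨t₁, hbt₁, ht₁t⟩ := exists_covBy_right_ (bot_lt_iff_ne_bot.mpr ht)
          have hne : y₀ ≠ t₁ := fun h => h₀t (h ▸ ht₁t)
          obtain ⟨z₁, hy₀z₁, ht₁z₁, hc1, hc2⟩ := hU.2 ⊥ y₀ t₁ hvy₀ hbt₁ hne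
          have hz₁r : z₁ ≤ r :=
            hBr ⊥ y₀ t₁ z₁ hvy₀ hbt₁ hne hy₀z₁ ht₁z₁ hc1 hc2 h₀r (ht₁t.trans htr.le)
          have hz₁r' : z₁ ≤ r' :=
            hBr' ⊥ y₀ t₁ z₁ hvy₀ hbt₁ hne hy₀z₁ ht₁z₁ hc1 hc2 h₀r' (ht₁t.trans htr'.le)
          have hz₁t := subM t₁ hbt₁.lt.ne' t r r' z₁ ht₁t ht₁z₁.le htr htr' hrr' hz₁r hz₁r'
          exact h₀t (hy₀z₁.le.trans hz₁t)
      · exact h₀t (subM v hv t r r' y₀ hvt hvy₀.le htr htr' hrr' h₀r h₀r')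
    -- the diamond property by downward induction on the bound t
    have B : ∀ t x u w z : P, x ⋖ u → x ⋖ w → u ≠ w → u ⋖ z → w ⋖ z →
        c x u = c w z → c x w = c u z → u ≤ t → w ≤ t → z ≤ t := by
      intro t
      refine WellFounded.induction wellFounded_gt
        (C := fun t => ∀ x u w z : P, x ⋖ u → x ⋖ w → u ≠ w → u ⋖ z → w ⋖ z →
          c x u = c w z → c x w = c u z → u ≤ t → w ≤ t → z ≤ t) t ?_
      intro t IHt x u w z hxu hxw huw huz hwz hc1 hc2 hut hwt
      by_cases hx : x = ⊥
      · subst hx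
        by_contra hzt
        rcases lift_edge hU huz t hut with h | ⟨r, htr, hzr, hcr⟩
        · exact hzt h
        rcases lift_edge hU hwz t hwt with h | ⟨r', htr', hzr', hcr'⟩
        · exact hzt h
        have hrr' : r ≠ r' := by
          intro h; subst h
          exact hU.1 ⊥ u w hxu hxw huw (by rw [hc1, hc2, ← hcr']; exact hcr)
        exact hzt (meetAux t r r' htr htr' hrr' (IHt r htr.lt) (IHt r' htr'.lt) z hzr hzr')
      · exact subB x hx u w z hxu hxw huw huz hwz hc1 hc2 t hut hwt
    exact ⟨fun x u w z h1 h2 h3 h4 h5 h6 h7 t => B t x u w z h1 h2 h3 h4 h5 h6 h7,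
      fun t r r' y h1 h2 h3 h4 h5 => meetAux t r r' h1 h2 h3 (B r) (B r') y h4 h5⟩

/-- A finite poset with a global minimum whose cover graph admits a U-coloring
is an upper locally distributive lattice: it is a lattice, and each element `x`
has a unique inclusion-minimal set `M` of meet-irreducibles with `x = ⋀ M`. -/
theorem stmt_7 {P κ : Type} [PartialOrder P] [Fintype P] [OrderBot P]
    (c : P → P → κ) (hU : UColoring (· ⋖ ·) c) :
    (∀ a b : P, (∃ s : P, IsLUB {a, b} s) ∧ (∃ m : P, IsGLB {a, b} m)) ∧
    (∀ x : P, ∃! M : Finset P,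
      (∀ m ∈ M, MeetIrred m) ∧ IsGLB (↑M : Set P) x ∧
      (∀ A : Finset P, (∀ m ∈ A, MeetIrred m) → IsGLB (↑A : Set P) x → M ⊆ A)) := by
  classical
  obtain ⟨BP, MP⟩ := grand (Fintype.card P) P κ c hU le_rfl
  -- the lifting lemma with the least upper bound property
  have star : ∀ w x u : P, x ⋖ u → x ≤ w →
      ∃ j, (u ≤ j ∧ w ≤ j ∧ ∀ r, u ≤ r → w ≤ r → j ≤ r) ∧
        (¬ u ≤ w → w ⋖ j ∧ c w j = c x u) := by
    intro w
    refine WellFounded.induction wellFounded_lt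
      (C := fun w => ∀ x u : P, x ⋖ u → x ≤ w →
        ∃ j, (u ≤ j ∧ w ≤ j ∧ ∀ r, u ≤ r → w ≤ r → j ≤ r) ∧
          (¬ u ≤ w → w ⋖ j ∧ c w j = c x u)) w ?_
    intro w IH x u hxu hxw
    rcases eq_or_lt_of_le hxw with rfl | hlt
    · exact ⟨u, ⟨le_rfl, hxu.le, fun r h1 _ => h1⟩, fun _ => ⟨hxu, rfl⟩⟩
    · by_cases huw : u ≤ w
      · exact ⟨w, ⟨huw, le_rfl, fun r _ h => h⟩, fun h => absurd huw h⟩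
      · obtain ⟨w₁, hxw₁, hw₁w⟩ := exists_covBy_left_ hlt
        obtain ⟨j₁, ⟨huj₁, hw₁j₁, hleast₁⟩, hside₁⟩ := IH w₁ hw₁w.lt x u hxu hxw₁
        have huw₁ : ¬ u ≤ w₁ := fun h => huw (h.trans hw₁w.le)
        obtain ⟨hcov₁, hcol₁⟩ := hside₁ huw₁
        have hne : j₁ ≠ w := fun h => huw (h ▸ huj₁)
        obtain ⟨z, hj₁z, hwz, hcz1, hcz2⟩ := hU.2 w₁ j₁ w hcov₁ hw₁w hne
        refine ⟨z, ⟨huj₁.trans hj₁z.le, hwz.le, fun r h1 h2 => ?_⟩,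
          fun _ => ⟨hwz, by rw [← hcz1, hcol₁]⟩⟩
        exact BP w₁ j₁ w z hcov₁ hw₁w hne hj₁z hwz hcz1 hcz2 r
          (hleast₁ r h1 (hw₁w.le.trans h2)) h2
  -- binary joins
  have joins : ∀ a b : P, ∃ j, a ≤ j ∧ b ≤ j ∧ ∀ r, a ≤ r → b ≤ r → j ≤ r := by
    intro a
    refine WellFounded.induction wellFounded_lt
      (C := fun a => ∀ b : P, ∃ j, a ≤ j ∧ b ≤ j ∧ ∀ r, a ≤ r → b ≤ r → j ≤ r) a ?_
    intro a IH b
    by_cases ha : a = ⊥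
    · exact ⟨b, ha ▸ bot_le, le_rfl, fun r _ h => h⟩
    · obtain ⟨a₁, -, ha₁a⟩ := exists_covBy_left_ (bot_lt_iff_ne_bot.mpr ha)
      obtain ⟨j', h1, h2, h3⟩ := IH a₁ ha₁a.lt b
      obtain ⟨J, ⟨haJ, hj'J, hleast⟩, -⟩ := star j' a₁ a ha₁a h1
      exact ⟨J, haJ, h2.trans hj'J,
        fun r hra hrb => hleast r hra (h3 r (ha₁a.le.trans hra) hrb)⟩
  -- least upper bounds of finite sets
  have finlub : ∀ s : Finset P, ∃ j : P, (∀ y ∈ s, y ≤ j) ∧ ∀ r, (∀ y ∈ s, y ≤ r) → j ≤ r := by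
    intro s
    induction s using Finset.induction_on with
    | empty => exact ⟨⊥, by simp, fun r _ => bot_le⟩
    | @insert a s ha IHs =>
      obtain ⟨j, h1, h2⟩ := IHs
      obtain ⟨J, haJ, hjJ, hleast⟩ := joins a j
      refine ⟨J, ?_, ?_⟩
      · intro y hy
        rcases Finset.mem_insert.mp hy with rfl | hy
        · exact haJ
        · exact (h1 y hy).trans hjJ
      · intro r hr
        exact hleast r (hr a (Finset.mem_insert_self a s))
          (h2 r fun y hy => hr y (Finset.mem_insert_of_mem hy))
  -- binary meets
  have glbs : ∀ a b : P, ∃ m : P, IsGLB {a, b} m := by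
    intro a b
    obtain ⟨j, h1, h2⟩ := finlub ((Set.toFinite {d : P | d ≤ a ∧ d ≤ b}).toFinset)
    simp only [Set.Finite.mem_toFinset, Set.mem_setOf_eq] at h1 h2
    refine ⟨j, ?_, ?_⟩
    · rintro s (rfl | rfl)
      · exact h2 _ fun y hy => hy.1
      · exact h2 _ fun y hy => hy.2
    · intro y hy
      exact h1 y ⟨hy (Set.mem_insert _ _), hy (Set.mem_insert_of_mem _ rfl)⟩
  -- join-primeness of covers
  have P1 : ∀ b x u s j : P, x ⋖ u → x ≤ b → ¬ u ≤ b → x ≤ s → ¬ u ≤ s →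
      (s ≤ j ∧ b ≤ j ∧ ∀ r, s ≤ r → b ≤ r → j ≤ r) → ¬ u ≤ j := by
    intro b
    refine WellFounded.induction wellFounded_lt
      (C := fun b => ∀ x u s j : P, x ⋖ u → x ≤ b → ¬ u ≤ b → x ≤ s → ¬ u ≤ s →
        (s ≤ j ∧ b ≤ j ∧ ∀ r, s ≤ r → b ≤ r → j ≤ r) → ¬ u ≤ j) b ?_
    rintro b IH x u s j hxu hxb hub hxs hus ⟨hsj, hbj, hjle⟩ huj
    rcases eq_or_lt_of_le hxb with rfl | hxb'
    · exact hus (huj.trans (hjle s le_rfl hxs))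
    · obtain ⟨b₁, hxb₁, hb₁b⟩ := exists_covBy_left_ hxb'
      obtain ⟨J₁, hsJ₁, hb₁J₁, hJ₁le⟩ := joins s b₁
      have hub₁ : ¬ u ≤ b₁ := fun h => hub (h.trans hb₁b.le)
      have hIH : ¬ u ≤ J₁ := IH b₁ hb₁b.lt x u s J₁ hxu hxb₁ hub₁ hxs hus ⟨hsJ₁, hb₁J₁, hJ₁le⟩
      by_cases hbJ₁ : b ≤ J₁
      · exact hIH (huj.trans (hjle J₁ hsJ₁ hbJ₁))
      · obtain ⟨jb, ⟨hbjb, hJ₁jb, hjbleast⟩, hside⟩ := star J₁ b₁ b hb₁b hb₁J₁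
        obtain ⟨hcovJ₁jb, hcoljb⟩ := hside hbJ₁
        have hJ₁j : J₁ ≤ j := hJ₁le j hsj (hb₁b.le.trans hbj)
        have hj_eq : j = jb :=
          le_antisymm (hjle jb (hsJ₁.trans hJ₁jb) hbjb) (hjbleast j hbj hJ₁j)
        obtain ⟨p, ⟨hup, hJ₁p, hpleast⟩, hpside⟩ := star J₁ x u hxu (hxs.trans hsJ₁)
        obtain ⟨hcovJ₁p, hcolp⟩ := hpside hIH
        have hpj : p ≤ j := hpleast j huj hJ₁j
        have hpeq : p = j := by
          rcases hpj.lt_or_eq with h | h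
          · have hpjb : p < jb := hj_eq ▸ h
            exact absurd hpjb (hcovJ₁jb.2 hcovJ₁p.1)
          · exact h
        obtain ⟨q, ⟨huq, hb₁q, hqleast⟩, hqside⟩ := star b₁ x u hxu hxb₁
        obtain ⟨hcovb₁q, hcolq⟩ := hqside hub₁
        have hqb : q = b := by
          by_contra hqb
          exact hU.1 b₁ q b hcovb₁q hb₁b hqb
            (by rw [hcolq, ← hcolp, hpeq, hj_eq, hcoljb])
        exact hub (hqb ▸ huq)
  -- the maximal element avoiding a cover, and its meet-irreducibility
  have exists_mu : ∀ x u : P, x ⋖ u →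
      ∃ m, x ≤ m ∧ ¬ u ≤ m ∧ (∀ s, x ≤ s → ¬ u ≤ s → s ≤ m) ∧ MeetIrred m := by
    intro x u hxu
    obtain ⟨m, ⟨hxm, hum⟩, hmax⟩ :=
      wellFounded_gt.has_min {s : P | x ≤ s ∧ ¬ u ≤ s} ⟨x, le_rfl, hxu.lt.not_ge⟩
    have hmaxle : ∀ s, x ≤ s → ¬ u ≤ s → s ≤ m := by
      intro s hxs hus
      obtain ⟨j, hsj, hmj, hjle⟩ := joins s m
      have hj : ¬ u ≤ j := P1 m x u s j hxu hxm hum hxs hus ⟨hsj, hmj, hjle⟩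
      have hjm : j = m := by
        rcases hmj.lt_or_eq with h | h
        · exact absurd h (hmax j ⟨hxm.trans hmj, hj⟩)
        · exact h.symm
      exact hjm ▸ hsj
    obtain ⟨mp, ⟨hump, hmmp, hmpleast⟩, hmside⟩ := star m x u hxu hxm
    obtain ⟨hcovmmp, -⟩ := hmside hum
    refine ⟨m, hxm, hum, hmaxle, Or.inl ⟨mp, hcovmmp, ?_⟩⟩
    intro q hq
    have hxq : x ≤ q := hxm.trans hq.le
    have huq : u ≤ q := by
      by_contra h
      exact hq.lt.not_ge (hmaxle q hxq h)
    have hmpq : mp ≤ q := hmpleast q huq hq.le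
    rcases hmpq.lt_or_eq with h | h
    · exact absurd h (hq.2 hcovmmp.1)
    · exact h.symm
  constructor
  · intro a b
    constructor
    · obtain ⟨j, h1, h2, h3⟩ := joins a b
      refine ⟨j, ?_, ?_⟩
      · rintro s (rfl | rfl)
        · exact h1
        · exact h2
      · intro r hr
        exact h3 r (hr (Set.mem_insert _ _)) (hr (Set.mem_insert_of_mem _ rfl))
    · exact glbs a b
  · intro x
    choose mf hmf1 hmf2 hmf3 hmf4 using exists_mu
    set M : Finset P :=
      (Set.toFinite {m : P | ∃ u, ∃ h : x ⋖ u, m = mf x u h}).toFinset with hM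
    have hmem : ∀ m : P, m ∈ M ↔ ∃ u, ∃ h : x ⋖ u, m = mf x u h := by
      intro m; simp [hM, Set.Finite.mem_toFinset]
    have hprop1 : ∀ m ∈ M, MeetIrred m := by
      intro m hm
      obtain ⟨u, h, rfl⟩ := (hmem m).mp hm
      exact hmf4 x u h
    have hprop2 : IsGLB (↑M : Set P) x := by
      constructor
      · intro m hm
        obtain ⟨u, h, rfl⟩ := (hmem m).mp (Finset.mem_coe.mp hm)
        exact hmf1 x u h
      · intro y hy
        obtain ⟨g, hyg, hxg, hgle⟩ := joins y x
        rcases hxg.lt_or_eq with hlt | heq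
        · exfalso
          obtain ⟨u₀, hxu₀, hu₀g⟩ := exists_covBy_right_ hlt
          have hgm : g ≤ mf x u₀ hxu₀ :=
            hgle _ (hy (Finset.mem_coe.mpr ((hmem _).mpr ⟨u₀, hxu₀, rfl⟩)))
              (hmf1 x u₀ hxu₀)
          exact hmf2 x u₀ hxu₀ (hu₀g.trans hgm)
        · exact heq ▸ hyg
    have hprop3 : ∀ A : Finset P, (∀ m ∈ A, MeetIrred m) → IsGLB (↑A : Set P) x → M ⊆ A := by
      intro A hAirr hAglb m hm
      obtain ⟨u, h, rfl⟩ := (hmem m).mp hm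
      have hnall : ¬ ∀ a ∈ A, u ≤ a := by
        intro hall
        exact h.lt.not_ge (hAglb.2 fun a ha => hall a (Finset.mem_coe.mp ha))
      push_neg at hnall
      obtain ⟨a, haA, hua⟩ := hnall
      have hxa : x ≤ a := hAglb.1 (Finset.mem_coe.mpr haA)
      have ham : a ≤ mf x u h := hmf3 x u h a hxa hua
      rcases ham.lt_or_eq with hlt | heq
      · exfalso
        rcases hAirr a haA with ⟨ap, hcova, huniq⟩ | htop
        · obtain ⟨q, haq, hqm⟩ := exists_covBy_right_ hlt
          obtain ⟨p, ⟨hup, hap, -⟩, hside⟩ := star a x u h hxa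
          obtain ⟨hcovap, -⟩ := hside hua
          have h1 : p = ap := huniq p hcovap
          have h2 : q = ap := huniq q haq
          have huq : u ≤ q := by rw [h2, ← h1]; exact hup
          exact hmf2 x u h (huq.trans hqm)
        · exact hua (htop u)
      · exact heq ▸ haA
    refine ⟨M, ⟨hprop1, hprop2, hprop3⟩, ?_⟩
    rintro M' ⟨h1, h2, h3⟩
    exact Finset.Subset.antisymm (h3 M hprop1 hprop2) (hprop3 M' h1 h2)
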